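/- Let 𝒩 be a nonempty finite set of vectors in [0,1]^k. Then there exists a constant ε > 0 such that for every pair (w, c) with w ∈ ℝ^k, ‖w‖₂ = 1 and c ∈ ℝ satisfying #{u ∈ 𝒩 : wᵀu − c > 0} < #𝒩, there is a measurable set ℰ(w,c) of unit vectors in ℝ^k whose surface measure on the unit sphere of ℝ^k is at least ε, such that for every w' ∈ ℰ(w,c) there exists v ∈ 𝒩 with {u ∈ 𝒩 : (w')ᵀu − (w')ᵀv > 0} = {u ∈ 𝒩 : wᵀu − c > 0}. -/

import Mathlib

open MeasureTheory
open scoped RealInnerProductSpace Classical ENNReal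

lemma arith0 {s : ℝ} (hs0 : 0 ≤ s) (hs1 : s < 1) : 0 ≤ 1 - s ^ 2 := by nlinarith

lemma arith0' {s : ℝ} (hs0 : 0 ≤ s) : 1 - s ^ 2 ≤ 1 := by nlinarith

lemma arith1 {s t : ℝ} (ht2 : t ^ 2 = 1 - s ^ 2) (ht0 : 0 ≤ t) : 1 - t ≤ s ^ 2 := by nlinarith

lemma arith2 {A s t r : ℝ} (h2 : A = s ^ 2 + (t - 1) ^ 2) (h1t : 1 - t ≤ s ^ 2) (ht1 : t ≤ 1)
    (hs0 : 0 ≤ s) (hs1 : s < 1) (hr : 0 < r) (hs : s < r / 2) : A < r ^ 2 := by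
  have e1 : (t - 1) ^ 2 ≤ s ^ 2 * s ^ 2 := by nlinarith
  have e2 : s ^ 2 ≤ 1 := by nlinarith
  have e3 : s ^ 2 < r ^ 2 / 4 := by nlinarith
  nlinarith

lemma aux_sphere_cap_pos (k : ℕ) (U : Set (EuclideanSpace ℝ (Fin k))) (hU : IsOpen U)
    (w : EuclideanSpace ℝ (Fin k)) (hw : ‖w‖ = 1) (hwU : w ∈ U) :
    0 < μH[(k : ℝ) - 1] (Metric.sphere (0 : EuclideanSpace ℝ (Fin k)) 1 ∩ U) := by
  rcases Nat.eq_zero_or_pos k with hk | hk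
  · subst hk
    haveI : Subsingleton (EuclideanSpace ℝ (Fin 0)) := ⟨fun a b => by ext i; exact i.elim0⟩
    rw [Subsingleton.elim w 0, norm_zero] at hw; norm_num at hw
  obtain ⟨r, hr0, hrU⟩ := Metric.isOpen_iff.1 hU w hwU
  set r1 := min r 1 with hr1def
  have hr10 : 0 < r1 := lt_min hr0 one_pos
  have hr11 : r1 ≤ 1 := min_le_right _ _
  have hball : Metric.ball w r1 ⊆ U := (Metric.ball_subset_ball (min_le_left _ _)).trans hrU
  have hw0 : w ≠ 0 := by intro h; rw [h, norm_zero] at hw; norm_num at hw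
  haveI : Fact (Module.finrank ℝ (EuclideanSpace ℝ (Fin k)) = (k - 1) + 1) :=
    ⟨by rw [finrank_euclideanSpace_fin]; omega⟩
  set K := (ℝ ∙ w)ᗮ with hKdef
  have hdim : Module.finrank ℝ K = k - 1 := Submodule.finrank_orthogonal_span_singleton hw0
  let e : K ≃ₗᵢ[ℝ] EuclideanSpace ℝ (Fin (k - 1)) :=
    ((stdOrthonormalBasis ℝ K).reindex (finCongr hdim)).repr
  let P := K.orthogonalProjection
  let φ : EuclideanSpace ℝ (Fin k) → (Fin (k - 1) → ℝ) :=
    fun x => WithLp.equiv 2 _ (e (P x))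
  have hP1 : LipschitzWith 1 (fun x => (P x : K)) := by
    refine LipschitzWith.weaken (P.lipschitz) ?_
    have h := Submodule.orthogonalProjection_norm_le K
    exact_mod_cast h
  have hφ : LipschitzWith 1 φ := by
    have h3 := PiLp.lipschitzWith_ofLp 2 (fun _ : Fin (k - 1) => ℝ)
    have := h3.comp ((e.lipschitz).comp hP1)
    simp only [mul_one] at this
    exact this
  have hd0 : (0 : ℝ) ≤ (k : ℝ) - 1 := by
    have : (1 : ℝ) ≤ (k : ℝ) := by exact_mod_cast hk
    linarith
  -- target open set in pi space
  set T : Set (Fin (k - 1) → ℝ) :=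
    (WithLp.equiv 2 _) '' (Metric.ball (0 : EuclideanSpace ℝ (Fin (k - 1))) (r1 / 2)) with hTdef
  have hTopen : IsOpen T := by
    rw [hTdef, Equiv.image_eq_preimage_symm]
    exact (PiLp.continuous_toLp 2 (fun _ : Fin (k-1) => ℝ)).isOpen_preimage _
      Metric.isOpen_ball
  have hT0 : (0 : Fin (k - 1) → ℝ) ∈ T :=
    ⟨0, Metric.mem_ball_self (by positivity), rfl⟩
  have hTvol : 0 < volume T := hTopen.measure_pos volume ⟨0, hT0⟩
  have hμeq : (μH[(k : ℝ) - 1] : Measure (Fin (k - 1) → ℝ)) = volume := by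
    have h := hausdorffMeasure_pi_real (ι := Fin (k - 1))
    rw [Fintype.card_fin] at h
    rw [show ((k : ℝ) - 1) = ((k - 1 : ℕ) : ℝ) by push_cast [Nat.cast_sub hk]; ring]
    exact h
  -- key inclusion
  have hsub : T ⊆ φ '' (Metric.sphere (0 : EuclideanSpace ℝ (Fin k)) 1 ∩ Metric.ball w r1) := by
    rintro t ⟨x, hx, rfl⟩
    rw [Metric.mem_ball, dist_zero_right] at hx
    set y : K := e.symm x with hydef
    have hyx : ‖(y : EuclideanSpace ℝ (Fin k))‖ = ‖x‖ := by
      rw [hydef]; rw [← e.symm.norm_map x]; rfl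
    set s := ‖x‖ with hsdef
    have hs0 : 0 ≤ s := norm_nonneg _
    have hs : s < r1 / 2 := hx
    have hs1 : s < 1 := by
      have : r1 / 2 ≤ 1 / 2 := by linarith
      linarith
    set t := Real.sqrt (1 - s ^ 2) with htdef
    have ht2 : t ^ 2 = 1 - s ^ 2 := Real.sq_sqrt (arith0 hs0 hs1)
    have ht0 : 0 ≤ t := Real.sqrt_nonneg _
    have ht1 : t ≤ 1 := by
      rw [htdef]; exact Real.sqrt_le_one.2 (arith0' hs0)
    set z : EuclideanSpace ℝ (Fin k) := (y : EuclideanSpace ℝ (Fin k)) + t • w with hzdef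
    have horth : ⟪(y : EuclideanSpace ℝ (Fin k)), w⟫ = 0 := by
      have hy : (y : EuclideanSpace ℝ (Fin k)) ∈ (ℝ ∙ w)ᗮ := y.2
      exact (Submodule.mem_orthogonal' _ _).1 hy w (Submodule.mem_span_singleton_self w)
    have hzw : ∀ a : ℝ, ‖(y : EuclideanSpace ℝ (Fin k)) + a • w‖ ^ 2 = s ^ 2 + a ^ 2 := by
      intro a
      rw [← hyx]
      rw [norm_add_sq_real, real_inner_smul_right, horth, norm_smul, hw]
      simp [mul_pow, sq_abs]
    have hznorm : ‖z‖ = 1 := by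
      have h1 : ‖z‖ ^ 2 = 1 := by rw [hzdef, hzw t]; linarith [ht2]
      have h2 : ‖z‖ = Real.sqrt (‖z‖ ^ 2) := (Real.sqrt_sq (norm_nonneg z)).symm
      rw [h2, h1, Real.sqrt_one]
    have hzball : z ∈ Metric.ball w r1 := by
      rw [Metric.mem_ball, dist_eq_norm]
      have hzw2 : z - w = (y : EuclideanSpace ℝ (Fin k)) + (t - 1) • w := by
        rw [hzdef]; module
      have h2 : ‖z - w‖ ^ 2 = s ^ 2 + (t - 1) ^ 2 := by rw [hzw2, hzw (t - 1)]
      have hbound : ‖z - w‖ ^ 2 < r1 ^ 2 := arith2 h2 (arith1 ht2 ht0) ht1 hs0 hs1 hr10 hs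
      exact lt_of_pow_lt_pow_left₀ 2 hr10.le hbound
    have hφz : φ z = WithLp.equiv 2 _ x := by
      have hPy : P (y : EuclideanSpace ℝ (Fin k)) = y :=
        Submodule.orthogonalProjection_mem_subspace_eq_self y
      have hwK : w ∈ Kᗮ := Submodule.le_orthogonal_orthogonal _ (Submodule.mem_span_singleton_self w)
      have hPw : P w = 0 := Submodule.orthogonalProjection_mem_subspace_orthogonalComplement_eq_zero hwK
      have hPz : P z = y := by
        rw [hzdef, map_add, P.map_smul, hPy, hPw, smul_zero, add_zero]
      show WithLp.equiv 2 _ (e (P z)) = WithLp.equiv 2 _ x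
      rw [hPz, hydef, e.apply_symm_apply]
    exact ⟨z, ⟨by rwa [mem_sphere_zero_iff_norm], hzball⟩, hφz⟩
  calc (0 : ℝ≥0∞) < volume T := hTvol
    _ = μH[(k : ℝ) - 1] T := by rw [hμeq]
    _ ≤ μH[(k : ℝ) - 1] (φ '' (Metric.sphere (0 : EuclideanSpace ℝ (Fin k)) 1 ∩ Metric.ball w r1)) :=
        measure_mono hsub
    _ ≤ μH[(k : ℝ) - 1] (Metric.sphere (0 : EuclideanSpace ℝ (Fin k)) 1 ∩ Metric.ball w r1) := by
        have h := hφ.hausdorffMeasure_image_le hd0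
          (Metric.sphere (0 : EuclideanSpace ℝ (Fin k)) 1 ∩ Metric.ball w r1)
        simpa using h
    _ ≤ μH[(k : ℝ) - 1] (Metric.sphere (0 : EuclideanSpace ℝ (Fin k)) 1 ∩ U) :=
        measure_mono (Set.inter_subset_inter_right _ hball)

theorem stmt0 (k : ℕ) (N : Finset (EuclideanSpace ℝ (Fin k))) (hN : N.Nonempty)
    (hN01 : ∀ u ∈ N, ∀ i, u i ∈ Set.Icc (0 : ℝ) 1) :
    ∃ ε : ℝ≥0∞, 0 < ε ∧
      ∀ (w : EuclideanSpace ℝ (Fin k)) (c : ℝ), ‖w‖ = 1 →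
        (N.filter fun u => 0 < ⟪w, u⟫ - c).card < N.card →
        ∃ E : Set (EuclideanSpace ℝ (Fin k)),
          E ⊆ Metric.sphere (0 : EuclideanSpace ℝ (Fin k)) 1 ∧
          MeasurableSet E ∧
          ε ≤ μH[(k : ℝ) - 1] E ∧
          ∀ w' ∈ E, ∃ v ∈ N,
            (N.filter fun u => 0 < ⟪w', u⟫ - ⟪w', v⟫) =
              N.filter fun u => 0 < ⟪w, u⟫ - c := by
  classical
  set Sph := Metric.sphere (0 : EuclideanSpace ℝ (Fin k)) 1 with hSph
  set Us : Finset (EuclideanSpace ℝ (Fin k)) → Set (EuclideanSpace ℝ (Fin k)) :=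
    fun S => {w' | ∀ u ∈ S, ∀ v ∈ N \ S, ⟪w', v⟫ < ⟪w', u⟫} with hUs
  have hUsOpen : ∀ S, IsOpen (Us S) := by
    intro S
    have heq : Us S = ⋂ u ∈ S, ⋂ v ∈ N \ S, {w' : EuclideanSpace ℝ (Fin k) | ⟪w', v⟫ < ⟪w', u⟫} := by
      ext w'; simp only [hUs, Set.mem_setOf_eq, Set.mem_iInter, Finset.mem_sdiff]
      try tauto
    rw [heq]
    refine isOpen_biInter_finset fun u hu => isOpen_biInter_finset fun v hv => ?_
    exact isOpen_lt (Continuous.inner continuous_id continuous_const)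
      (Continuous.inner continuous_id continuous_const)
  set W : Finset (EuclideanSpace ℝ (Fin k)) → Set (EuclideanSpace ℝ (Fin k)) :=
    fun S => Sph ∩ Us S with hW
  refine ⟨N.powerset.inf (fun S => if (W S).Nonempty then μH[(k : ℝ) - 1] (W S) else 1), ?_, ?_⟩
  · rw [Finset.lt_inf_iff (by norm_num : (0 : ℝ≥0∞) < ⊤)]
    intro S _
    split_ifs with h
    · obtain ⟨w', hw'⟩ := h
      have hw'n : ‖w'‖ = 1 := by
        have := hw'.1; rwa [hSph, mem_sphere_zero_iff_norm] at this
      exact aux_sphere_cap_pos k (Us S) (hUsOpen S) w' hw'n hw'.2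
    · norm_num
  · intro w c hwnorm hcard
    set S := N.filter (fun u => 0 < ⟪w, u⟫ - c) with hSdef
    have hSN : S ⊆ N := Finset.filter_subset _ _
    have hwW : w ∈ W S := by
      refine ⟨by rwa [hSph, mem_sphere_zero_iff_norm], ?_⟩
      intro u hu v hv
      have hu2 : 0 < ⟪w, u⟫ - c := (Finset.mem_filter.mp hu).2
      rw [Finset.mem_sdiff] at hv
      have hv2 : ¬ (0 < ⟪w, v⟫ - c) := fun h => hv.2 (Finset.mem_filter.mpr ⟨hv.1, h⟩)
      push_neg at hv2
      linarith
    refine ⟨W S, Set.inter_subset_left, (Metric.isClosed_sphere.measurableSet).inter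
      (hUsOpen S).measurableSet, ?_, ?_⟩
    · have hle := Finset.inf_le (Finset.mem_powerset.mpr hSN)
        (f := fun S => if (W S).Nonempty then μH[(k : ℝ) - 1] (W S) else 1)
      exact hle.trans_eq (if_pos ⟨w, hwW⟩)
    · intro w' hw'
      have hNS : (N \ S).Nonempty := by
        rw [Finset.sdiff_nonempty]
        intro h
        exact absurd (Finset.card_le_card h) (by omega)
      obtain ⟨v, hvNS, hvmax⟩ := Finset.exists_max_image (N \ S) (fun v => ⟪w', v⟫) hNS
      refine ⟨v, (Finset.mem_sdiff.mp hvNS).1, ?_⟩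
      ext u
      simp only [hSdef, Finset.mem_filter]
      constructor
      · rintro ⟨huN, hlt⟩
        refine ⟨huN, ?_⟩
        by_contra hpos
        have huS : u ∉ S := by
          rw [hSdef, Finset.mem_filter]
          tauto
        have humem : u ∈ N \ S := Finset.mem_sdiff.mpr ⟨huN, huS⟩
        have hmax : ⟪w', u⟫ ≤ ⟪w', v⟫ := hvmax u humem
        linarith
      · rintro ⟨huN, hpos⟩
        have huS : u ∈ S := by
          rw [hSdef]
          exact Finset.mem_filter.mpr ⟨huN, hpos⟩
        refine ⟨huN, ?_⟩
        have hlt : ⟪w', v⟫ < ⟪w', u⟫ := hw'.2 u huS v hvNS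
        linarith
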